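/- Let A be an associative unital ℂ-algebra, q ∈ ℂ, and a, b ∈ A satisfying b·a = 1 + q·(a·b). Define the q-Stirling numbers S(n,k) ∈ ℂ for n ≥ 1, 1 ≤ k ≤ n by the recursion S(1,1) = 1, S(n,1) = S(n−1,1) for n ≥ 2, S(n,n) = q^{n−1} S(n−1,n−1) for n ≥ 2, and S(n,k) = [k]_q · S(n−1,k) + q^{k−1} · S(n−1,k−1) for 2 ≤ k ≤ n−1. Then for every n ≥ 1, (a·b)^n = Σ_{k=1}^n S(n,k) · a^k · b^k. -/
import Mathlib


open Finset

/-- q-bracket `[n]_q = 1 + q + ⋯ + q^(n-1)`. -/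
noncomputable def qBracket (q : ℂ) (n : ℕ) : ℂ := ∑ j ∈ Finset.range n, q ^ j

/-- The q-Stirling numbers `S(n,k)` defined by the recursion `S(1,1) = 1`,
`S(n,1) = S(n-1,1)`, `S(n,n) = q^(n-1) S(n-1,n-1)` and
`S(n,k) = [k]_q S(n-1,k) + q^(k-1) S(n-1,k-1)` for `2 ≤ k ≤ n-1`
(with the conventions `S(0,0) = 1` and `S(n,k) = 0` for `k = 0 < n` or `k > n`,
which reproduce exactly this recursion). -/
noncomputable def qStirling (q : ℂ) : ℕ → ℕ → ℂ
  | 0, 0 => 1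
  | 0, _ + 1 => 0
  | _ + 1, 0 => 0
  | n + 1, k + 1 => qBracket q (k + 1) * qStirling q n (k + 1) + q ^ k * qStirling q n k

lemma qStirling_zero (q : ℂ) (n : ℕ) : qStirling q (n+1) 0 = 0 := rfl

lemma qStirling_succ (q : ℂ) (n k : ℕ) :
    qStirling q (n+1) (k+1) = qBracket q (k + 1) * qStirling q n (k + 1) + q ^ k * qStirling q n k := rfl

lemma qStirling_eq_zero (q : ℂ) : ∀ n k, n < k → qStirling q n k = 0 := by
  intro n
  induction n with
  | zero =>
    intro k hk
    match k, hk with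
    | k+1, _ => rfl
  | succ n ih =>
    intro k hk
    match k, hk with
    | k+1, hk =>
      rw [qStirling_succ, ih (k+1) (by omega), ih k (by omega)]
      ring

lemma qBracket_succ (q : ℂ) (k : ℕ) : qBracket q (k+1) = qBracket q k + q ^ k := by
  simp [qBracket, Finset.sum_range_succ]

/-- In an associative unital ℂ-algebra, if `b·a = 1 + q·(a·b)` then
`(a·b)^n = Σ_{k=1}^n S(n,k) a^k b^k` for every `n ≥ 1`. -/
theorem mul_pow_eq_sum_qStirling {A : Type*} [Ring A] [Algebra ℂ A] (q : ℂ) (a b : A)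
    (h : b * a = 1 + q • (a * b)) (n : ℕ) (hn : 1 ≤ n) :
    (a * b) ^ n = ∑ k ∈ Finset.Icc 1 n, qStirling q n k • (a ^ k * b ^ k) := by
  have key : ∀ k : ℕ, b * a ^ (k+1) =
      qBracket q (k+1) • a ^ k + (q ^ (k+1)) • (a ^ (k+1) * b) := by
    intro k
    induction k with
    | zero => simpa [qBracket] using h
    | succ k ih =>
      have e : b * a ^ (k+2) = (b * a ^ (k+1)) * a := by
        rw [pow_succ, ← mul_assoc]
      rw [e, ih]
      simp only [add_mul, smul_mul_assoc, mul_assoc, h, mul_add, mul_one,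
        mul_smul_comm, smul_add, smul_smul, qBracket_succ q (k+1), add_smul]
      simp only [← mul_assoc, ← pow_succ, ← pow_succ']
      abel
  have main : ∀ m : ℕ, (a * b) ^ (m+1) =
      ∑ k ∈ Finset.range (m+1), qStirling q (m+1) (k+1) • (a ^ (k+1) * b ^ (k+1)) := by
    intro m
    induction m with
    | zero => simp [qStirling, qBracket]
    | succ m ih =>
      have e : (a * b) ^ (m+2) = (a * b) * (a * b) ^ (m+1) := by rw [← pow_succ']
      rw [e, ih, Finset.mul_sum]
      have term : ∀ k : ℕ, (a * b) * (qStirling q (m+1) (k+1) • (a ^ (k+1) * b ^ (k+1))) =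
          (qBracket q (k+1) * qStirling q (m+1) (k+1)) • (a ^ (k+1) * b ^ (k+1))
          + (q ^ (k+1) * qStirling q (m+1) (k+1)) • (a ^ (k+2) * b ^ (k+2)) := by
        intro k
        have e2 : (a * b) * (a ^ (k+1) * b ^ (k+1)) = a * (b * a ^ (k+1)) * b ^ (k+1) := by
          rw [mul_assoc, mul_assoc, mul_assoc]
        rw [mul_smul_comm, e2, key k, mul_add, add_mul, smul_add, mul_smul_comm,
          mul_smul_comm, smul_mul_assoc, smul_mul_assoc, smul_smul, smul_smul,
          mul_comm (qStirling q (m+1) (k+1)) (qBracket q (k+1)),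
          mul_comm (qStirling q (m+1) (k+1)) (q ^ (k+1))]
        congr 2
        · rw [← pow_succ']
        · rw [← mul_assoc, ← pow_succ', mul_assoc, ← pow_succ']
      rw [Finset.sum_congr rfl (fun k _ => term k), Finset.sum_add_distrib]
      have lhs1 : ∑ k ∈ Finset.range (m+1),
          (qBracket q (k+1) * qStirling q (m+1) (k+1)) • (a ^ (k+1) * b ^ (k+1)) =
          ∑ k ∈ Finset.range (m+2),
          (qBracket q (k+1) * qStirling q (m+1) (k+1)) • (a ^ (k+1) * b ^ (k+1)) := by
        rw [Finset.sum_range_succ (n := m+1),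
          qStirling_eq_zero q (m+1) (m+1+1) (by omega)]
        simp
      have lhs2 : ∑ k ∈ Finset.range (m+1),
          (q ^ (k+1) * qStirling q (m+1) (k+1)) • (a ^ (k+2) * b ^ (k+2)) =
          ∑ k ∈ Finset.range (m+2),
          (q ^ k * qStirling q (m+1) k) • (a ^ (k+1) * b ^ (k+1)) := by
        rw [Finset.sum_range_succ' (fun k => (q ^ k * qStirling q (m+1) k) • (a ^ (k+1) * b ^ (k+1))) (m+1)]
        simp [qStirling_zero]
      rw [lhs1, lhs2, ← Finset.sum_add_distrib]
      apply Finset.sum_congr rfl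
      intro k _
      rw [← add_smul, ← qStirling_succ q (m+1) k]
  obtain ⟨m, rfl⟩ : ∃ m, n = m + 1 := ⟨n - 1, by omega⟩
  rw [main m, show Finset.Icc 1 (m+1) = Finset.Ico 1 (m+2) from (Finset.Ico_add_one_right_eq_Icc 1 (m+1)).symm,
    Finset.sum_Ico_eq_sum_range]
  simp [add_comm]
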